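/- arXiv:2101.12638 — 7 statements merged into one kernel-verified Lean document; each statement's English description precedes it below -/
import Mathlib

section
/- Given f_1, f_2 ∈ 𝔻 with Φ_2(z) = (z - f_1)(z - f_2) and Φ_2*(z) = (1 - conj(f_1)z)(1 - conj(f_2)z), the point f_3 = (f_1 + f_2 - f_2|f_1|² - f_1|f_2|²)/(1 - |f_1 f_2|²) lies in the open unit disk 𝔻. -/
open Complex

theorem stmt_2 (f1 f2 : ℂ) (h1 : ‖f1‖ < 1) (h2 : ‖f2‖ < 1) :
    ‖(f1 + f2 - f2 * (‖f1‖ : ℂ) ^ 2 - f1 * (‖f2‖ : ℂ) ^ 2) /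
      (1 - (‖f1 * f2‖ : ℂ) ^ 2)‖ < 1 := by
  set a := ‖f1‖ with ha
  set b := ‖f2‖ with hb
  have ha0 : 0 ≤ a := norm_nonneg f1
  have hb0 : 0 ≤ b := norm_nonneg f2
  have hd : (1 : ℂ) - (‖f1 * f2‖ : ℂ) ^ 2 = ((1 - (a * b) ^ 2 : ℝ) : ℂ) := by
    push_cast [norm_mul]
    ring
  have hab : a * b < 1 := by nlinarith
  have hdpos : 0 < 1 - (a * b) ^ 2 := by nlinarith [mul_nonneg ha0 hb0]
  rw [norm_div, hd, Complex.norm_real, Real.norm_eq_abs, abs_of_pos hdpos,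
    div_lt_one hdpos]
  have hnum : f1 + f2 - f2 * (a : ℂ) ^ 2 - f1 * (b : ℂ) ^ 2
      = f1 * (1 - (b : ℂ) ^ 2) + f2 * (1 - (a : ℂ) ^ 2) := by ring
  rw [hnum]
  have h3 : ‖f1 * (1 - (b : ℂ) ^ 2) + f2 * (1 - (a : ℂ) ^ 2)‖
      ≤ a * (1 - b ^ 2) + b * (1 - a ^ 2) := by
    refine (norm_add_le _ _).trans ?_
    rw [norm_mul, norm_mul]
    have e1 : ‖1 - (b : ℂ) ^ 2‖ = 1 - b ^ 2 := by
      rw [show (1 : ℂ) - (b : ℂ) ^ 2 = ((1 - b ^ 2 : ℝ) : ℂ) by push_cast; ring,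
        Complex.norm_real, Real.norm_eq_abs, abs_of_pos (by nlinarith)]
    have e2 : ‖1 - (a : ℂ) ^ 2‖ = 1 - a ^ 2 := by
      rw [show (1 : ℂ) - (a : ℂ) ^ 2 = ((1 - a ^ 2 : ℝ) : ℂ) by push_cast; ring,
        Complex.norm_real, Real.norm_eq_abs, abs_of_pos (by nlinarith)]
    rw [e1, e2]
  nlinarith [h3, mul_pos (show (0:ℝ) < 1 - a by linarith) (show (0:ℝ) < 1 - b by linarith), mul_nonneg ha0 hb0]
end

section
/- Let f_1, f_2 ∈ 𝔻 and define f_3 = (f_1 + f_2 - f_2|f_1|² - f_1|f_2|²)/(1 - |f_1 f_2|²). Then f_3 satisfies the Mirman equation f_1·f_2 = (f_3 - f_1)(f_3 - f_2)/((1 - conj(f_1)f_3)(1 - conj(f_2)f_3)). -/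
open Complex

theorem aux_mirman (a b c d : ℂ) (hca : 1 - c * b ≠ 0) (hdb : 1 - d * a ≠ 0)
    (hac : 1 - a * c ≠ 0) (hbd : 1 - b * d ≠ 0) (hD : 1 - a * c * (b * d) ≠ 0) :
    let f3 : ℂ := (a + b - b * (a * c) - a * (b * d)) / (1 - a * c * (b * d))
    a * b = (f3 - a) * (f3 - b) / ((1 - c * f3) * (1 - d * f3)) := by
  intro f3
  have hD' : 1 - c * a * b * d ≠ 0 := by convert hD using 1; ring
  have hD'' : 1 - d * a * b * c ≠ 0 := by convert hD using 1; ring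
  have hD''' : 1 - a * b * c * d ≠ 0 := by convert hD using 1; ring
  have key1 : (1 : ℂ) - c * f3 = (1 - a * c) * (1 - c * b) / (1 - a * c * (b * d)) := by
    show (1 : ℂ) - c * ((a + b - b * (a * c) - a * (b * d)) / (1 - a * c * (b * d))) = _
    field_simp
    ring
  have key2 : (1 : ℂ) - d * f3 = (1 - b * d) * (1 - d * a) / (1 - a * c * (b * d)) := by
    show (1 : ℂ) - d * ((a + b - b * (a * c) - a * (b * d)) / (1 - a * c * (b * d))) = _
    field_simp
    ring
  have hd1 : (1 : ℂ) - c * f3 ≠ 0 := by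
    rw [key1]; exact div_ne_zero (mul_ne_zero hac hca) hD
  have hd2 : (1 : ℂ) - d * f3 ≠ 0 := by
    rw [key2]; exact div_ne_zero (mul_ne_zero hbd hdb) hD
  rw [eq_div_iff (mul_ne_zero hd1 hd2), key1, key2]
  show a * b * _ = ((a + b - b * (a * c) - a * (b * d)) / (1 - a * c * (b * d)) - a) *
      ((a + b - b * (a * c) - a * (b * d)) / (1 - a * c * (b * d)) - b)
  field_simp
  ring

theorem stmt_3 (f1 f2 : ℂ) (h1 : ‖f1‖ < 1) (h2 : ‖f2‖ < 1) :
    let f3 : ℂ := (f1 + f2 - f2 * (‖f1‖ : ℂ) ^ 2 - f1 * (‖f2‖ : ℂ) ^ 2) /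
      (1 - (‖f1 * f2‖ : ℂ) ^ 2)
    f1 * f2 = (f3 - f1) * (f3 - f2) /
      ((1 - (starRingEnd ℂ) f1 * f3) * (1 - (starRingEnd ℂ) f2 * f3)) := by
  intro f3
  have ha0 := norm_nonneg f1
  have hb0 := norm_nonneg f2
  have hA : ((‖f1‖ : ℂ)) ^ 2 = f1 * (starRingEnd ℂ) f1 := by
    rw [← Complex.ofReal_pow, Complex.sq_norm]
    exact (Complex.mul_conj f1).symm
  have hB : ((‖f2‖ : ℂ)) ^ 2 = f2 * (starRingEnd ℂ) f2 := by
    rw [← Complex.ofReal_pow, Complex.sq_norm]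
    exact (Complex.mul_conj f2).symm
  have hAB : ((‖f1 * f2‖ : ℂ)) ^ 2 =
      (f1 * (starRingEnd ℂ) f1) * ((f2 * (starRingEnd ℂ) f2)) := by
    rw [← Complex.ofReal_pow, Complex.sq_norm, map_mul]
    push_cast
    rw [← Complex.mul_conj f1, ← Complex.mul_conj f2]
  have h1' : (1 : ℂ) - (starRingEnd ℂ) f1 * f2 ≠ 0 := by
    intro h
    have he : (starRingEnd ℂ) f1 * f2 = 1 := by linear_combination -h
    have := congrArg (‖·‖) he
    simp only [norm_mul, Complex.norm_conj, norm_one] at this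
    nlinarith
  have h2' : (1 : ℂ) - (starRingEnd ℂ) f2 * f1 ≠ 0 := by
    intro h
    have he : (starRingEnd ℂ) f2 * f1 = 1 := by linear_combination -h
    have := congrArg (‖·‖) he
    simp only [norm_mul, Complex.norm_conj, norm_one] at this
    nlinarith
  have hac : (1 : ℂ) - f1 * (starRingEnd ℂ) f1 ≠ 0 := by
    rw [← hA, ← Complex.ofReal_pow, ← Complex.ofReal_one, ← Complex.ofReal_sub,
      Complex.ofReal_ne_zero]
    nlinarith
  have hbd : (1 : ℂ) - f2 * (starRingEnd ℂ) f2 ≠ 0 := by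
    rw [← hB, ← Complex.ofReal_pow, ← Complex.ofReal_one, ← Complex.ofReal_sub,
      Complex.ofReal_ne_zero]
    nlinarith
  have hD : (1 : ℂ) - f1 * (starRingEnd ℂ) f1 * (f2 * (starRingEnd ℂ) f2) ≠ 0 := by
    rw [← hAB, ← Complex.ofReal_pow, ← Complex.ofReal_one, ← Complex.ofReal_sub,
      Complex.ofReal_ne_zero, norm_mul]
    have hm : ‖f1‖ * ‖f2‖ < 1 := by nlinarith
    nlinarith [mul_nonneg ha0 hb0]
  have := aux_mirman f1 f2 ((starRingEnd ℂ) f1) ((starRingEnd ℂ) f2) h1' h2' hac hbd hD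
  simp only at this
  show f1 * f2 = (_ - f1) * (_ - f2) / _
  rw [show f3 = (f1 + f2 - f2 * (f1 * (starRingEnd ℂ) f1) - f1 * (f2 * (starRingEnd ℂ) f2)) /
      (1 - f1 * (starRingEnd ℂ) f1 * (f2 * (starRingEnd ℂ) f2)) by
    show (f1 + f2 - f2 * (‖f1‖ : ℂ) ^ 2 - f1 * (‖f2‖ : ℂ) ^ 2) /
      (1 - (‖f1 * f2‖ : ℂ) ^ 2) = _
    rw [hA, hB, hAB]]
  exact this
end

section
/- Given f_1, f_2 ∈ 𝔻, set conj(b) = f_1(f_1 - f_2)/(1 - conj(f_2) f_1). Then |b| < 1 and the polynomial Φ_2(z) = z(z - f_2) - conj(b)·(1 - conj(f_2)z) vanishes at z = f_1. -/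
open Complex

theorem stmt_6 (f1 f2 b : ℂ) (h1 : ‖f1‖ < 1) (h2 : ‖f2‖ < 1)
    (hb : (starRingEnd ℂ) b = f1 * (f1 - f2) / (1 - (starRingEnd ℂ) f2 * f1)) :
    ‖b‖ < 1 ∧
    f1 * (f1 - f2) - (starRingEnd ℂ) b * (1 - (starRingEnd ℂ) f2 * f1) = 0 := by
  have habs : ‖1 - (starRingEnd ℂ) f2 * f1‖ > 0 := by
    have h : ‖(starRingEnd ℂ) f2 * f1‖ < 1 := by
      rw [norm_mul, Complex.norm_conj]
      nlinarith [norm_nonneg f1, norm_nonneg f2]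
    have := norm_nonneg (1 - (starRingEnd ℂ) f2 * f1)
    rcases lt_or_eq_of_le this with h' | h'
    · exact h'
    · exfalso
      have : (1 : ℂ) - (starRingEnd ℂ) f2 * f1 = 0 := by
        rwa [eq_comm, norm_eq_zero] at h'
      have : (starRingEnd ℂ) f2 * f1 = 1 := by linear_combination -this
      rw [this] at h; simp at h
  have hden : (1 : ℂ) - (starRingEnd ℂ) f2 * f1 ≠ 0 := by
    intro h; rw [h] at habs; simp at habs
  have key : Complex.normSq (f1 - f2) < Complex.normSq (1 - (starRingEnd ℂ) f2 * f1) := by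
    have hn1 : Complex.normSq f1 < 1 := by
      rw [← Complex.sq_norm]; nlinarith [norm_nonneg f1]
    have hn2 : Complex.normSq f2 < 1 := by
      rw [← Complex.sq_norm]; nlinarith [norm_nonneg f2]
    have expand : Complex.normSq (1 - (starRingEnd ℂ) f2 * f1) - Complex.normSq (f1 - f2)
        = (1 - Complex.normSq f1) * (1 - Complex.normSq f2) := by
      simp [Complex.normSq_apply, Complex.sub_re, Complex.sub_im, Complex.mul_re,
        Complex.mul_im, Complex.conj_re, Complex.conj_im]
      ring
    nlinarith
  have habs2 : ‖f1 - f2‖ < ‖1 - (starRingEnd ℂ) f2 * f1‖ := by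
    rw [Complex.norm_def, Complex.norm_def]
    exact Real.sqrt_lt_sqrt (Complex.normSq_nonneg _) key
  constructor
  · have : ‖b‖ = ‖f1‖ * ‖f1 - f2‖ /
        ‖1 - (starRingEnd ℂ) f2 * f1‖ := by
      rw [← Complex.norm_conj, hb, norm_div, norm_mul]
    rw [this, div_lt_one habs]
    nlinarith [norm_nonneg f1, norm_nonneg (f1 - f2)]
  · rw [hb, div_mul_cancel₀ _ hden]
    ring
end

section
/- Szegő recursion preserves zeros in the disk: if Φ_{k}(z) is a monic polynomial of degree k with all zeros in 𝔻, α ∈ 𝔻, and Φ_{k+1}(z) = zΦ_k(z) - conj(α)Φ_k*(z) where Φ_k*(z) = z^k conj(Φ_k(1/conj(z))), then all zeros of Φ_{k+1} lie in 𝔻. -/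
open Complex Finset

theorem stmt_7 (k : ℕ) (r : Fin k → ℂ) (hr : ∀ j, ‖r j‖ < 1)
    (α : ℂ) (hα : ‖α‖ < 1) (w : ℂ)
    (hw : w * (∏ j, (w - r j)) - (starRingEnd ℂ) α * (∏ j, (1 - (starRingEnd ℂ) (r j) * w)) = 0) :
    ‖w‖ < 1 := by
  by_contra h
  push_neg at h
  have hw' : w * (∏ j, (w - r j)) = (starRingEnd ℂ) α * (∏ j, (1 - (starRingEnd ℂ) (r j) * w)) := by
    linear_combination hw
  set Q := ∏ j, (1 - (starRingEnd ℂ) (r j) * w) with hQ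
  by_cases hQ0 : Q = 0
  · rw [hQ0, mul_zero, mul_eq_zero] at hw'
    rcases hw' with h0 | hP
    · rw [h0] at h; simp at h; linarith
    · obtain ⟨j, _, hj⟩ := Finset.prod_eq_zero_iff.mp hP
      have hwj : w = r j := by linear_combination hj
      rw [hwj] at h
      linarith [hr j]
  · have key : ∀ j : Fin k, ‖1 - (starRingEnd ℂ) (r j) * w‖ ≤ ‖w - r j‖ := by
      intro j
      have h1 : Complex.normSq (1 - (starRingEnd ℂ) (r j) * w) ≤ Complex.normSq (w - r j) := by
        have hr2 : (r j).re ^ 2 + (r j).im ^ 2 < 1 := by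
          have h' : Complex.normSq (r j) < 1 := by
            rw [← Complex.sq_norm]; nlinarith [norm_nonneg (r j), hr j]
          simpa [Complex.normSq_apply, sq] using h'
        have hw2 : 1 ≤ w.re ^ 2 + w.im ^ 2 := by
          have h' : 1 ≤ Complex.normSq w := by
            rw [← Complex.sq_norm]; nlinarith [norm_nonneg w]
          simpa [Complex.normSq_apply, sq] using h'
        simp only [Complex.normSq_apply, Complex.sub_re, Complex.sub_im, Complex.mul_re,
          Complex.mul_im, Complex.one_re, Complex.one_im, Complex.conj_re, Complex.conj_im]
        nlinarith [hr2, hw2]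
      have h2 := Real.sqrt_le_sqrt h1
      simpa [Complex.norm_def] using h2
    have hPQ : ‖Q‖ ≤ ‖∏ j, (w - r j)‖ := by
      rw [hQ, norm_prod, norm_prod]
      exact Finset.prod_le_prod (fun j _ => norm_nonneg _) (fun j _ => key j)
    have h1 : ‖Q‖ ≤ ‖w * ∏ j, (w - r j)‖ := by
      rw [norm_mul]
      calc ‖Q‖ ≤ ‖∏ j, (w - r j)‖ := hPQ
        _ = 1 * ‖∏ j, (w - r j)‖ := (one_mul _).symm
        _ ≤ ‖w‖ * ‖∏ j, (w - r j)‖ :=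
            mul_le_mul_of_nonneg_right h (norm_nonneg _)
    have h2 : ‖w * ∏ j, (w - r j)‖ < ‖Q‖ := by
      rw [hw', norm_mul, Complex.norm_conj]
      calc ‖α‖ * ‖Q‖ < 1 * ‖Q‖ :=
            mul_lt_mul_of_pos_right hα (norm_pos_iff.mpr hQ0)
        _ = ‖Q‖ := one_mul _
    linarith
end

section
/- Paraorthogonal polynomials have unimodular zeros: if Φ_{n-1} is a monic polynomial of degree n-1 with all zeros in 𝔻 and λ ∈ 𝕋 (the unit circle), then every zero of the polynomial zΦ_{n-1}(z) - conj(λ)Φ_{n-1}*(z) lies on the unit circle 𝕋. -/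
open Complex Finset

lemma key_id (r w : ℂ) :
    Complex.normSq (1 - (starRingEnd ℂ) r * w) - Complex.normSq (w - r)
      = (1 - Complex.normSq r) * (1 - Complex.normSq w) := by
  simp only [Complex.normSq_apply, Complex.sub_re, Complex.sub_im, Complex.mul_re,
    Complex.mul_im, Complex.conj_re, Complex.conj_im, Complex.one_re, Complex.one_im]
  ring

lemma key_lt (r w : ℂ) (hr : ‖r‖ < 1) (hw : ‖w‖ < 1) :
    ‖w - r‖ < ‖1 - (starRingEnd ℂ) r * w‖ := by
  have h1 : Complex.normSq r < 1 := by
    rw [Complex.normSq_eq_norm_sq]; nlinarith [norm_nonneg r]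
  have h2 : Complex.normSq w < 1 := by
    rw [Complex.normSq_eq_norm_sq]; nlinarith [norm_nonneg w]
  have h : Complex.normSq (w - r) < Complex.normSq (1 - (starRingEnd ℂ) r * w) := by
    nlinarith [key_id r w]
  calc ‖w - r‖ = Real.sqrt (Complex.normSq (w - r)) := Complex.norm_def _
    _ < Real.sqrt (Complex.normSq (1 - (starRingEnd ℂ) r * w)) :=
        Real.sqrt_lt_sqrt (Complex.normSq_nonneg _) h
    _ = _ := (Complex.norm_def _).symm

lemma key_gt (r w : ℂ) (hr : ‖r‖ < 1) (hw : 1 < ‖w‖) :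
    ‖1 - (starRingEnd ℂ) r * w‖ < ‖w - r‖ := by
  have h1 : Complex.normSq r < 1 := by
    rw [Complex.normSq_eq_norm_sq]; nlinarith [norm_nonneg r]
  have h2 : 1 < Complex.normSq w := by
    rw [Complex.normSq_eq_norm_sq]; nlinarith
  have h : Complex.normSq (1 - (starRingEnd ℂ) r * w) < Complex.normSq (w - r) := by
    nlinarith [key_id r w]
  calc ‖1 - (starRingEnd ℂ) r * w‖
      = Real.sqrt (Complex.normSq (1 - (starRingEnd ℂ) r * w)) := Complex.norm_def _
    _ < Real.sqrt (Complex.normSq (w - r)) := Real.sqrt_lt_sqrt (Complex.normSq_nonneg _) h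
    _ = _ := (Complex.norm_def _).symm

theorem stmt_8 (n : ℕ) (r : Fin n → ℂ) (hr : ∀ j, ‖r j‖ < 1)
    (lam : ℂ) (hlam : ‖lam‖ = 1) (w : ℂ)
    (hw : w * (∏ j, (w - r j)) - (starRingEnd ℂ) lam * (∏ j, (1 - (starRingEnd ℂ) (r j) * w)) = 0) :
    ‖w‖ = 1 := by
  have heq : w * (∏ j, (w - r j)) = (starRingEnd ℂ) lam * (∏ j, (1 - (starRingEnd ℂ) (r j) * w)) :=
    sub_eq_zero.mp hw
  have habs : ‖w‖ * (∏ j, ‖w - r j‖)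
      = ∏ j, ‖1 - (starRingEnd ℂ) (r j) * w‖ := by
    have := congrArg (‖·‖) heq
    simpa [map_mul, map_prod, Complex.norm_conj, hlam] using this
  rcases lt_trichotomy (‖w‖) 1 with h | h | h
  · exfalso
    have hposRHS : ∀ j ∈ Finset.univ (α := Fin n),
        0 < ‖1 - (starRingEnd ℂ) (r j) * w‖ := by
      intro j _
      have hlt : ‖(starRingEnd ℂ) (r j) * w‖ < 1 := by
        rw [norm_mul, Complex.norm_conj]
        nlinarith [norm_nonneg (r j), norm_nonneg w, hr j]
      have hne : (1 : ℂ) - (starRingEnd ℂ) (r j) * w ≠ 0 := by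
        intro hzero
        have h1 : (starRingEnd ℂ) (r j) * w = 1 := by linear_combination -hzero
        rw [h1] at hlt
        simp at hlt
      simpa using norm_pos_iff.mpr hne
    have hprodle : (∏ j, ‖w - r j‖) ≤ ∏ j, ‖1 - (starRingEnd ℂ) (r j) * w‖ :=
      Finset.prod_le_prod (fun j _ => norm_nonneg _)
        (fun j _ => (key_lt (r j) w (hr j) h).le)
    have hprodpos : 0 < ∏ j, ‖1 - (starRingEnd ℂ) (r j) * w‖ :=
      Finset.prod_pos hposRHS
    have : ‖w‖ * (∏ j, ‖w - r j‖)
        < ∏ j, ‖1 - (starRingEnd ℂ) (r j) * w‖ := by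
      calc ‖w‖ * (∏ j, ‖w - r j‖)
          ≤ ‖w‖ * (∏ j, ‖1 - (starRingEnd ℂ) (r j) * w‖) := by
            exact mul_le_mul_of_nonneg_left hprodle (norm_nonneg w)
        _ < 1 * (∏ j, ‖1 - (starRingEnd ℂ) (r j) * w‖) :=
            mul_lt_mul_of_pos_right h hprodpos
        _ = _ := one_mul _
    exact absurd habs this.ne
  · exact h
  · exfalso
    have hposLHS : ∀ j ∈ Finset.univ (α := Fin n), 0 < ‖w - r j‖ := by
      intro j _
      have : w - r j ≠ 0 := by
        intro hzero
        have : w = r j := sub_eq_zero.mp hzero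
        rw [this] at h
        exact absurd (hr j) (not_lt.mpr h.le)
      simpa using norm_pos_iff.mpr this
    have hprodle : (∏ j, ‖1 - (starRingEnd ℂ) (r j) * w‖) ≤ ∏ j, ‖w - r j‖ :=
      Finset.prod_le_prod (fun j _ => norm_nonneg _)
        (fun j _ => (key_gt (r j) w (hr j) h).le)
    have hprodpos : 0 < ∏ j, ‖w - r j‖ := Finset.prod_pos hposLHS
    have : (∏ j, ‖1 - (starRingEnd ℂ) (r j) * w‖)
        < ‖w‖ * (∏ j, ‖w - r j‖) := by
      calc (∏ j, ‖1 - (starRingEnd ℂ) (r j) * w‖)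
          ≤ ∏ j, ‖w - r j‖ := hprodle
        _ = 1 * ∏ j, ‖w - r j‖ := (one_mul _).symm
        _ < ‖w‖ * (∏ j, ‖w - r j‖) :=
            mul_lt_mul_of_pos_right h hprodpos
    exact absurd habs this.ne'
end

section
/- Composition of regular Blaschke products and polynomial factorization: if B_j(z) = z∏_{m=1}^{j-1}(z - a_m)/(1 - conj(a_m)z) with a_m ∈ 𝔻 and B_k(z) = zΦ_{k-1}(z)/Φ_{k-1}*(z) with Φ_{k-1} monic with zeros in 𝔻, then the composition B_j(B_k(z)) equals zΦ_{n-1}(z)/Φ_{n-1}*(z) where n = jk and Φ_{n-1}(z) = Φ_{k-1}(z)·∏_{m=1}^{j-1}(zΦ_{k-1}(z) - a_m Φ_{k-1}*(z)). -/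
open Complex Finset

theorem stmt_9 (J K : ℕ) (a : Fin J → ℂ) (ha : ∀ m, ‖a m‖ < 1)
    (r : Fin K → ℂ) (hr : ∀ i, ‖r i‖ < 1) (z : ℂ)
    (hPstar : (∏ i, (1 - (starRingEnd ℂ) (r i) * z)) ≠ 0)
    (hden : ∀ m, (∏ i, (1 - (starRingEnd ℂ) (r i) * z)) -
      (starRingEnd ℂ) (a m) * (z * ∏ i, (z - r i)) ≠ 0) :
    (z * (∏ i, (z - r i)) / (∏ i, (1 - (starRingEnd ℂ) (r i) * z))) *
      ∏ m, ((z * (∏ i, (z - r i)) / (∏ i, (1 - (starRingEnd ℂ) (r i) * z))) - a m) /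
        (1 - (starRingEnd ℂ) (a m) *
          (z * (∏ i, (z - r i)) / (∏ i, (1 - (starRingEnd ℂ) (r i) * z))))
    = z * ((∏ i, (z - r i)) *
        ∏ m, (z * (∏ i, (z - r i)) - a m * ∏ i, (1 - (starRingEnd ℂ) (r i) * z))) /
      ((∏ i, (1 - (starRingEnd ℂ) (r i) * z)) *
        ∏ m, ((∏ i, (1 - (starRingEnd ℂ) (r i) * z)) -
          (starRingEnd ℂ) (a m) * (z * ∏ i, (z - r i)))) := by
  set P := ∏ i, (z - r i) with hP
  set Q := ∏ i, (1 - (starRingEnd ℂ) (r i) * z) with hQ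
  have key : ∀ m : Fin J,
      ((z * P / Q) - a m) / (1 - (starRingEnd ℂ) (a m) * (z * P / Q))
        = (z * P - a m * Q) / (Q - (starRingEnd ℂ) (a m) * (z * P)) := by
    intro m
    have h1 : 1 - (starRingEnd ℂ) (a m) * (z * P / Q)
        = (Q - (starRingEnd ℂ) (a m) * (z * P)) / Q := by
      field_simp
    have h2 : z * P / Q - a m = (z * P - a m * Q) / Q := by
      field_simp
    rw [h1, h2, div_div_div_eq, mul_comm Q, ← div_div_div_eq,
      div_self hPstar, div_one]
  rw [Finset.prod_congr rfl fun m _ => key m, Finset.prod_div_distrib,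
    div_mul_div_comm, mul_assoc]
end

section
/- Let f_1, f_2, f_5 ∈ 𝔻 with f_1 f_2 f_5 ≠ 0, and set f_3 = (f_5 - f_2)/(1 - f_2 conj(f_5)) and f_4 = (f_5 - f_1)/(1 - f_1 conj(f_5)). If f_5(f_5-f_4)(f_5-f_3)/((1-conj(f_4)f_5)(1-conj(f_3)f_5)) = f_1 f_2 f_5, then (1 - conj(f_2)f_5)(1 - conj(f_1)f_5) is a real number. -/
open Complex

theorem stmt_16 (f1 f2 f5 : ℂ) (h1 : ‖f1‖ < 1) (h2 : ‖f2‖ < 1)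
    (h5 : ‖f5‖ < 1) (hne : f1 * f2 * f5 ≠ 0) :
    let f3 : ℂ := (f5 - f2) / (1 - f2 * (starRingEnd ℂ) f5)
    let f4 : ℂ := (f5 - f1) / (1 - f1 * (starRingEnd ℂ) f5)
    f5 * (f5 - f4) * (f5 - f3) /
        ((1 - (starRingEnd ℂ) f4 * f5) * (1 - (starRingEnd ℂ) f3 * f5)) = f1 * f2 * f5 →
    ((1 - (starRingEnd ℂ) f2 * f5) * (1 - (starRingEnd ℂ) f1 * f5)).im = 0 := by
  intro f3 f4 h
  have hd1 : (1 : ℂ) - f1 * (starRingEnd ℂ) f5 ≠ 0 := by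
    intro hc
    have he : f1 * (starRingEnd ℂ) f5 = 1 := by linear_combination -hc
    have : ‖f1 * (starRingEnd ℂ) f5‖ = 1 := by rw [he]; simp
    rw [norm_mul, Complex.norm_conj] at this
    nlinarith [norm_nonneg f1, norm_nonneg f5]
  have hd2 : (1 : ℂ) - f2 * (starRingEnd ℂ) f5 ≠ 0 := by
    intro hc
    have he : f2 * (starRingEnd ℂ) f5 = 1 := by linear_combination -hc
    have : ‖f2 * (starRingEnd ℂ) f5‖ = 1 := by rw [he]; simp
    rw [norm_mul, Complex.norm_conj] at this
    nlinarith [norm_nonneg f2, norm_nonneg f5]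
  have hcd1 : (1 : ℂ) - (starRingEnd ℂ) f1 * f5 ≠ 0 := by
    intro hc
    apply hd1
    have := congrArg (starRingEnd ℂ) hc
    simpa [mul_comm] using this
  have hcd2 : (1 : ℂ) - (starRingEnd ℂ) f2 * f5 ≠ 0 := by
    intro hc
    apply hd2
    have := congrArg (starRingEnd ℂ) hc
    simpa [mul_comm] using this
  have h5sq : (1 : ℂ) - f5 * (starRingEnd ℂ) f5 ≠ 0 := by
    intro hc
    have he : f5 * (starRingEnd ℂ) f5 = 1 := by linear_combination -hc
    have : ‖f5 * (starRingEnd ℂ) f5‖ = 1 := by rw [he]; simp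
    rw [norm_mul, Complex.norm_conj] at this
    nlinarith [norm_nonneg f5]
  have e4 : f5 - (f5 - f1) / (1 - f1 * (starRingEnd ℂ) f5)
      = f1 * (1 - f5 * (starRingEnd ℂ) f5) / (1 - f1 * (starRingEnd ℂ) f5) := by
    field_simp; ring
  have e3 : f5 - (f5 - f2) / (1 - f2 * (starRingEnd ℂ) f5)
      = f2 * (1 - f5 * (starRingEnd ℂ) f5) / (1 - f2 * (starRingEnd ℂ) f5) := by
    field_simp; ring
  have g4 : 1 - (starRingEnd ℂ) ((f5 - f1) / (1 - f1 * (starRingEnd ℂ) f5)) * f5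
      = (1 - f5 * (starRingEnd ℂ) f5) / (1 - (starRingEnd ℂ) f1 * f5) := by
    rw [map_div₀]
    simp only [map_sub, map_mul, map_one, Complex.conj_conj]
    field_simp
    ring
  have g3 : 1 - (starRingEnd ℂ) ((f5 - f2) / (1 - f2 * (starRingEnd ℂ) f5)) * f5
      = (1 - f5 * (starRingEnd ℂ) f5) / (1 - (starRingEnd ℂ) f2 * f5) := by
    rw [map_div₀]
    simp only [map_sub, map_mul, map_one, Complex.conj_conj]
    field_simp
    ring
  simp only [f3, f4] at h
  rw [e3, e4, g3, g4] at h
  rw [div_eq_iff (mul_ne_zero (div_ne_zero h5sq hcd1) (div_ne_zero h5sq hcd2))] at h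
  field_simp at h
  have key : (1 - (starRingEnd ℂ) f2 * f5) * (1 - (starRingEnd ℂ) f1 * f5)
      = (1 - f2 * (starRingEnd ℂ) f5) * (1 - f1 * (starRingEnd ℂ) f5) := by
    have hN : f1 * f2 * f5 * ((1 - f5 * (starRingEnd ℂ) f5) * (1 - f5 * (starRingEnd ℂ) f5)) ≠ 0 :=
      mul_ne_zero hne (mul_ne_zero h5sq h5sq)
    apply mul_left_cancel₀ hN
    rw [div_eq_div_iff (by rw [mul_comm]; exact hd2)
      (mul_ne_zero (by rw [mul_comm]; exact hcd1) (by rw [mul_comm]; exact hcd2))] at h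
    linear_combination ((1 - f5 * (starRingEnd ℂ) f5) * (1 - f5 * (starRingEnd ℂ) f5)) * h
  have hc : (starRingEnd ℂ) ((1 - (starRingEnd ℂ) f2 * f5) * (1 - (starRingEnd ℂ) f1 * f5))
      = (1 - (starRingEnd ℂ) f2 * f5) * (1 - (starRingEnd ℂ) f1 * f5) := by
    simp only [map_mul, map_sub, map_one, Complex.conj_conj]
    linear_combination -key
  exact Complex.conj_eq_iff_im.mp hc
end
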